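/- Let Φ = log P where P(z, z̄) = 1 + Σ_{j=1}^n |z_j|² + Σ_{j=n+1}^N a_j |z^{m_j}|² with all a_j > 0. If the associated metric g_{αβ̄} = ∂²Φ/∂z_α∂z̄_β satisfies det(g_{αβ̄}) = e^{−(λ/2)Φ}, i.e. det(g_{αβ̄}) · P^{λ/2} ≡ 1, with λ/2 an integer, then λ > 0. -/

import Mathlib

open scoped BigOperators

/-- Wirtinger derivative `∂f/∂z_α`. -/
noncomputable def wD {n : ℕ} (f : (Fin n → ℂ) → ℂ) (α : Fin n) (z : Fin n → ℂ) : ℂ :=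
  (fderiv ℝ f z (Pi.single α 1) - Complex.I * fderiv ℝ f z (Pi.single α Complex.I)) / 2

/-- Conjugate Wirtinger derivative `∂f/∂z̄_α`. -/
noncomputable def wDbar {n : ℕ} (f : (Fin n → ℂ) → ℂ) (α : Fin n) (z : Fin n → ℂ) : ℂ :=
  (fderiv ℝ f z (Pi.single α 1) + Complex.I * fderiv ℝ f z (Pi.single α Complex.I)) / 2

/-- The matrix `g_{αβ̄} = ∂²Φ/∂z_α ∂z̄_β` of a Kähler metric with potential `Φ`. -/
noncomputable def kahlerMatrix {n : ℕ} (Φ : (Fin n → ℂ) → ℝ) (z : Fin n → ℂ) :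
    Matrix (Fin n) (Fin n) ℂ :=
  fun α β => wD (fun w => wDbar (fun v => (Φ v : ℂ)) β w) α z

section

open Complex

namespace W

variable {n : ℕ}

noncomputable def lin (A B : Fin n → ℂ) : (Fin n → ℂ) →L[ℝ] ℂ :=
  ∑ α, (A α • (ContinuousLinearMap.proj (R := ℝ) (φ := fun _ : Fin n => ℂ) α)
      + B α • ((Complex.conjCLE.toContinuousLinearMap).comp
          (ContinuousLinearMap.proj (R := ℝ) (φ := fun _ : Fin n => ℂ) α)))

lemma lin_apply (A B : Fin n → ℂ) (h : Fin n → ℂ) :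
    lin A B h = ∑ α, (A α * h α + B α * (starRingEnd ℂ) (h α)) := by
  simp [lin, smul_eq_mul]

lemma lin_single (A B : Fin n → ℂ) (α : Fin n) (c : ℂ) :
    lin A B (Pi.single α c) = A α * c + B α * (starRingEnd ℂ) c := by
  rw [lin_apply]
  rw [Finset.sum_eq_single α]
  · simp
  · intro b _ hb
    simp [Pi.single_eq_of_ne hb]
  · simp

def HasW (f : (Fin n → ℂ) → ℂ) (A B : Fin n → ℂ) (z : Fin n → ℂ) : Prop :=
  HasFDerivAt f (lin A B) z

lemma HasW.wD_eq {f : (Fin n → ℂ) → ℂ} {A B z} (h : HasW f A B z) (α : Fin n) :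
    wD f α z = A α := by
  unfold wD
  rw [HasFDerivAt.fderiv h]
  rw [lin_single, lin_single]
  have h2 : (Complex.I : ℂ) * Complex.I = -1 := Complex.I_mul_I
  simp only [map_one, mul_one, Complex.conj_I]
  linear_combination ((B α - A α) / 2) * h2

lemma HasW.wDbar_eq {f : (Fin n → ℂ) → ℂ} {A B z} (h : HasW f A B z) (α : Fin n) :
    wDbar f α z = B α := by
  unfold wDbar
  rw [HasFDerivAt.fderiv h]
  rw [lin_single, lin_single]
  have h2 : (Complex.I : ℂ) * Complex.I = -1 := Complex.I_mul_I
  simp only [map_one, mul_one, Complex.conj_I]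
  linear_combination ((A α - B α) / 2) * h2

lemma lin_zero : (lin 0 0 : (Fin n → ℂ) →L[ℝ] ℂ) = 0 := by
  ext h; simp [lin_apply]

lemma lin_add (A B A' B' : Fin n → ℂ) : lin (A + A') (B + B') = lin A B + lin A' B' := by
  ext h
  simp only [lin_apply, ContinuousLinearMap.add_apply, Pi.add_apply, ← Finset.sum_add_distrib]
  exact Finset.sum_congr rfl fun α _ => by ring

lemma lin_smul (c : ℂ) (A B : Fin n → ℂ) : lin (c • A) (c • B) = c • lin A B := by
  ext h
  simp only [lin_apply, ContinuousLinearMap.smul_apply, Pi.smul_apply, smul_eq_mul,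
    Finset.mul_sum]
  exact Finset.sum_congr rfl fun α _ => by ring

lemma hasW_const (c : ℂ) (z : Fin n → ℂ) : HasW (fun _ => c) 0 0 z := by
  unfold HasW; rw [lin_zero]; exact hasFDerivAt_const c z

lemma hasW_proj (i : Fin n) (z : Fin n → ℂ) :
    HasW (fun w => w i) (Pi.single i 1) 0 z := by
  unfold HasW
  have h : HasFDerivAt (fun w : Fin n → ℂ => w i)
      (ContinuousLinearMap.proj (R := ℝ) (φ := fun _ : Fin n => ℂ) i) z :=
    (ContinuousLinearMap.proj (R := ℝ) (φ := fun _ : Fin n => ℂ) i).hasFDerivAt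
  refine h.congr_fderiv (Eq.symm ?_)
  ext h'
  simp only [lin_apply, Pi.zero_apply, zero_mul, add_zero, ContinuousLinearMap.proj_apply]
  rw [Finset.sum_eq_single i]
  · simp
  · intro b _ hb; simp [Pi.single_eq_of_ne hb]
  · simp

lemma hasW_conj_proj (i : Fin n) (z : Fin n → ℂ) :
    HasW (fun w => (starRingEnd ℂ) (w i)) 0 (Pi.single i 1) z := by
  unfold HasW
  have h : HasFDerivAt (fun w : Fin n → ℂ => (starRingEnd ℂ) (w i))
      ((Complex.conjCLE.toContinuousLinearMap).comp
        (ContinuousLinearMap.proj (R := ℝ) (φ := fun _ : Fin n => ℂ) i)) z :=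
    ((Complex.conjCLE.toContinuousLinearMap).comp
        (ContinuousLinearMap.proj (R := ℝ) (φ := fun _ : Fin n => ℂ) i)).hasFDerivAt
  refine h.congr_fderiv (Eq.symm ?_)
  ext h'
  simp only [lin_apply, Pi.zero_apply, zero_mul, zero_add, ContinuousLinearMap.comp_apply,
    ContinuousLinearMap.proj_apply, ContinuousLinearEquiv.coe_coe, Complex.conjCLE_apply]
  rw [Finset.sum_eq_single i]
  · simp
  · intro b _ hb; simp [Pi.single_eq_of_ne hb]
  · simp

lemma HasW.add {f g : (Fin n → ℂ) → ℂ} {Af Bf Ag Bg z}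
    (hf : HasW f Af Bf z) (hg : HasW g Ag Bg z) :
    HasW (fun w => f w + g w) (Af + Ag) (Bf + Bg) z := by
  unfold HasW; rw [lin_add]; exact HasFDerivAt.add hf hg

lemma HasW.mul {f g : (Fin n → ℂ) → ℂ} {Af Bf Ag Bg z}
    (hf : HasW f Af Bf z) (hg : HasW g Ag Bg z) :
    HasW (fun w => f w * g w) (f z • Ag + g z • Af) (f z • Bg + g z • Bf) z := by
  unfold HasW
  rw [lin_add, lin_smul, lin_smul]
  exact HasFDerivAt.mul hf hg

lemma hasW_sum {ι : Type*} (s : Finset ι) (f : ι → (Fin n → ℂ) → ℂ)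
    (A B : ι → Fin n → ℂ) (z : Fin n → ℂ) (h : ∀ i ∈ s, HasW (f i) (A i) (B i) z) :
    HasW (fun w => ∑ i ∈ s, f i w) (∑ i ∈ s, A i) (∑ i ∈ s, B i) z := by
  classical
  induction s using Finset.induction_on with
  | empty => simpa using hasW_const 0 z
  | @insert a s ha ih =>
    rw [Finset.sum_insert ha, Finset.sum_insert ha]
    have := (h a (Finset.mem_insert_self a s)).add
      (ih fun i hi => h i (Finset.mem_insert_of_mem hi))
    convert this using 2 <;> simp [Finset.sum_insert ha]

lemma HasW.pow {f : (Fin n → ℂ) → ℂ} {A B z} (hf : HasW f A B z) (p : ℕ) :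
    HasW (fun w => f w ^ p) (((p : ℂ) * f z ^ (p - 1)) • A) (((p : ℂ) * f z ^ (p - 1)) • B) z := by
  induction p with
  | zero => simpa using hasW_const 1 z
  | succ p ih =>
    have h := ih.mul hf
    have e : ∀ (V : Fin n → ℂ), f z ^ p • V + f z • ((p : ℂ) * f z ^ (p - 1)) • V
        = (((p : ℕ) + 1 : ℂ) * f z ^ (p + 1 - 1)) • V := by
      intro V
      rw [smul_smul, ← add_smul]
      congr 1
      cases p with
      | zero => simp
      | succ p' =>
        push_cast
        ring
    convert h using 1
    · funext w; rw [pow_succ]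
    · rw [e A]; norm_cast
    · rw [e B]; norm_cast

lemma hasW_prod {ι : Type*} [DecidableEq ι] (s : Finset ι) (f : ι → (Fin n → ℂ) → ℂ)
    (A B : ι → Fin n → ℂ) (z : Fin n → ℂ) (h : ∀ i ∈ s, HasW (f i) (A i) (B i) z) :
    HasW (fun w => ∏ i ∈ s, f i w)
      (∑ i ∈ s, (∏ j ∈ s.erase i, f j z) • A i)
      (∑ i ∈ s, (∏ j ∈ s.erase i, f j z) • B i) z := by
  induction s using Finset.induction_on with
  | empty => simpa using hasW_const 1 z
  | @insert a s ha ih =>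
    have hmul := (h a (Finset.mem_insert_self a s)).mul
      (ih fun i hi => h i (Finset.mem_insert_of_mem hi))
    have hfe : (fun w => f a w * ∏ i ∈ s, f i w) = fun w => ∏ i ∈ insert a s, f i w := by
      funext w; rw [Finset.prod_insert ha]
    rw [hfe] at hmul
    convert hmul using 1
    · rw [Finset.sum_insert ha, Finset.smul_sum, Finset.erase_insert ha]
      rw [add_comm]
      congr 1
      refine Finset.sum_congr rfl fun i hi => ?_
      rw [smul_smul, Finset.erase_insert_of_ne, Finset.prod_insert]
      · exact fun hmem => ha (Finset.mem_of_mem_erase hmem)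
      · exact fun he => ha (he ▸ hi)
    · rw [Finset.sum_insert ha, Finset.smul_sum, Finset.erase_insert ha]
      rw [add_comm]
      congr 1
      refine Finset.sum_congr rfl fun i hi => ?_
      rw [smul_smul, Finset.erase_insert_of_ne, Finset.prod_insert]
      · exact fun hmem => ha (Finset.mem_of_mem_erase hmem)
      · exact fun he => ha (he ▸ hi)

lemma HasW.inv {f : (Fin n → ℂ) → ℂ} {A B z} (hf : HasW f A B z) (h0 : f z ≠ 0) :
    HasW (fun w => (f w)⁻¹) ((-((f z) ^ 2)⁻¹) • A) ((-((f z) ^ 2)⁻¹) • B) z := by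
  unfold HasW
  have h := (hasFDerivAt_inv' (𝕜 := ℝ) h0).comp z hf
  have heq : ((-(ContinuousLinearMap.mulLeftRight ℝ ℂ (f z)⁻¹ (f z)⁻¹)).comp (lin A B))
      = lin ((-((f z) ^ 2)⁻¹) • A) ((-((f z) ^ 2)⁻¹) • B) := by
    rw [lin_smul]
    ext v
    simp only [ContinuousLinearMap.comp_apply, ContinuousLinearMap.neg_apply,
      ContinuousLinearMap.mulLeftRight_apply, ContinuousLinearMap.smul_apply, smul_eq_mul]
    rw [sq, mul_inv]
    ring
  rw [heq] at h
  exact h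

lemma HasW.congr_fun {f g : (Fin n → ℂ) → ℂ} {A B z} (hf : HasW f A B z)
    (hfg : ∀ w, f w = g w) : HasW g A B z := by
  have : f = g := funext hfg
  rwa [this] at hf

lemma HasW.unique_A {f : (Fin n → ℂ) → ℂ} {A B A' B' : Fin n → ℂ} {z}
    (h1 : HasW f A B z) (h2 : HasW f A' B' z) : A = A' := by
  funext α
  rw [← h1.wD_eq α, h2.wD_eq α]

lemma HasW.unique_B {f : (Fin n → ℂ) → ℂ} {A B A' B' : Fin n → ℂ} {z}
    (h1 : HasW f A B z) (h2 : HasW f A' B' z) : B = B' := by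
  funext α
  rw [← h1.wDbar_eq α, h2.wDbar_eq α]


/-! ### Controlled growth along the diagonal ray -/

noncomputable def diagPt (n : ℕ) (t : ℝ) : Fin n → ℂ := fun _ => (t : ℂ)

def Ctrl (f : (Fin n → ℂ) → ℂ) (C : ℝ) (k : ℕ) : Prop :=
  ∀ t : ℝ, 1 ≤ t → ∃ A B : Fin n → ℂ, HasW f A B (diagPt n t) ∧
    ‖f (diagPt n t)‖ ≤ C * t ^ k ∧
    ∀ α, t * ‖A α‖ ≤ C * t ^ k ∧ t * ‖B α‖ ≤ C * t ^ k

lemma norm_single_le (i α : Fin n) : ‖(Pi.single i (1 : ℂ) : Fin n → ℂ) α‖ ≤ 1 := by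
  rcases eq_or_ne α i with h | h
  · subst h; simp
  · rw [Pi.single_eq_of_ne h]; simp

lemma Ctrl.of_le {f : (Fin n → ℂ) → ℂ} {C C' : ℝ} {k k' : ℕ}
    (h : Ctrl f C k) (hC : C ≤ C') (hk : k ≤ k') (hC0 : 0 ≤ C) : Ctrl f C' k' := by
  intro t ht
  obtain ⟨A, B, hW, hv, hAB⟩ := h t ht
  have ht0 : (0:ℝ) < t := lt_of_lt_of_le one_pos ht
  have hpow : t ^ k ≤ t ^ k' := pow_le_pow_right₀ ht hk
  have key : C * t ^ k ≤ C' * t ^ k' :=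
    mul_le_mul hC hpow (by positivity) (hC0.trans hC)
  exact ⟨A, B, hW, hv.trans key, fun α => ⟨(hAB α).1.trans key, (hAB α).2.trans key⟩⟩

lemma Ctrl.congr_fun {f g : (Fin n → ℂ) → ℂ} {C : ℝ} {k : ℕ}
    (hf : Ctrl f C k) (hfg : ∀ w, f w = g w) : Ctrl g C k := by
  have : f = g := funext hfg
  rwa [this] at hf

lemma ctrl_const (c : ℂ) : Ctrl (n := n) (fun _ => c) ‖c‖ 0 := by
  intro t ht
  exact ⟨0, 0, hasW_const c _, by simp, fun α => by simp⟩

lemma ctrl_proj (i : Fin n) : Ctrl (fun w => w i) 1 1 := by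
  intro t ht
  have ht0 : (0:ℝ) < t := lt_of_lt_of_le one_pos ht
  refine ⟨Pi.single i 1, 0, hasW_proj i _, ?_, fun α => ⟨?_, by simp [pow_one, ht0.le]⟩⟩
  · simp [diagPt, Complex.norm_real, abs_of_pos ht0, pow_one]
  · have h1 : ‖(Pi.single i (1:ℂ) : Fin n → ℂ) α‖ ≤ 1 := norm_single_le i α
    rw [pow_one, one_mul]
    nlinarith [norm_nonneg ((Pi.single i (1:ℂ) : Fin n → ℂ) α)]

lemma ctrl_conj_proj (i : Fin n) : Ctrl (fun w => (starRingEnd ℂ) (w i)) 1 1 := by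
  intro t ht
  have ht0 : (0:ℝ) < t := lt_of_lt_of_le one_pos ht
  refine ⟨0, Pi.single i 1, hasW_conj_proj i _, ?_, fun α => ⟨by simp [pow_one, ht0.le], ?_⟩⟩
  · simp [diagPt, Complex.norm_real, abs_of_pos ht0, pow_one]
  · have h1 : ‖(Pi.single i (1:ℂ) : Fin n → ℂ) α‖ ≤ 1 := norm_single_le i α
    rw [pow_one, one_mul]
    nlinarith [norm_nonneg ((Pi.single i (1:ℂ) : Fin n → ℂ) α)]

lemma Ctrl.add {f g : (Fin n → ℂ) → ℂ} {C₁ C₂ : ℝ} {k : ℕ}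
    (hf : Ctrl f C₁ k) (hg : Ctrl g C₂ k) : Ctrl (fun w => f w + g w) (C₁ + C₂) k := by
  intro t ht
  obtain ⟨A, B, hW, hv, hAB⟩ := hf t ht
  obtain ⟨A', B', hW', hv', hAB'⟩ := hg t ht
  have ht0 : (0:ℝ) < t := lt_of_lt_of_le one_pos ht
  refine ⟨A + A', B + B', hW.add hW', ?_, fun α => ⟨?_, ?_⟩⟩
  · calc ‖f (diagPt n t) + g (diagPt n t)‖ ≤ ‖f (diagPt n t)‖ + ‖g (diagPt n t)‖ :=
        norm_add_le _ _
      _ ≤ C₁ * t ^ k + C₂ * t ^ k := add_le_add hv hv'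
      _ = (C₁ + C₂) * t ^ k := by ring
  · have h1 : ‖(A + A') α‖ ≤ ‖A α‖ + ‖A' α‖ := norm_add_le _ _
    have := (hAB α).1
    have := (hAB' α).1
    nlinarith
  · have h1 : ‖(B + B') α‖ ≤ ‖B α‖ + ‖B' α‖ := norm_add_le _ _
    have := (hAB α).2
    have := (hAB' α).2
    nlinarith

lemma Ctrl.mul {f g : (Fin n → ℂ) → ℂ} {C₁ C₂ : ℝ} {k₁ k₂ : ℕ}
    (hf : Ctrl f C₁ k₁) (hg : Ctrl g C₂ k₂) (hC₁ : 0 ≤ C₁) (hC₂ : 0 ≤ C₂) :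
    Ctrl (fun w => f w * g w) (2 * C₁ * C₂) (k₁ + k₂) := by
  intro t ht
  have ht0 : (0:ℝ) < t := lt_of_lt_of_le one_pos ht
  obtain ⟨A, B, hW, hv, hAB⟩ := hf t ht
  obtain ⟨A', B', hW', hv', hAB'⟩ := hg t ht
  have hp1 : (0:ℝ) < t ^ k₁ := pow_pos ht0 _
  have hp2 : (0:ℝ) < t ^ k₂ := pow_pos ht0 _
  refine ⟨f (diagPt n t) • A' + g (diagPt n t) • A,
    f (diagPt n t) • B' + g (diagPt n t) • B, hW.mul hW', ?_, fun α => ⟨?_, ?_⟩⟩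
  · rw [norm_mul, pow_add]
    have h1 : ‖f (diagPt n t)‖ * ‖g (diagPt n t)‖ ≤ (C₁ * t ^ k₁) * (C₂ * t ^ k₂) :=
      mul_le_mul hv hv' (norm_nonneg _) (by positivity)
    nlinarith [mul_nonneg (mul_nonneg hC₁ hC₂) (mul_pos hp1 hp2).le]
  · have e1 : (f (diagPt n t) • A' + g (diagPt n t) • A) α
        = f (diagPt n t) * A' α + g (diagPt n t) * A α := by
      simp [smul_eq_mul]
    have h1 : ‖(f (diagPt n t) • A' + g (diagPt n t) • A) α‖
        ≤ ‖f (diagPt n t)‖ * ‖A' α‖ + ‖g (diagPt n t)‖ * ‖A α‖ := by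
      rw [e1]
      exact (norm_add_le _ _).trans (le_of_eq (by rw [norm_mul, norm_mul]))
    have h2 : ‖f (diagPt n t)‖ * (t * ‖A' α‖) ≤ (C₁ * t ^ k₁) * (C₂ * t ^ k₂) :=
      mul_le_mul hv (hAB' α).1 (by positivity) (by positivity)
    have h3 : ‖g (diagPt n t)‖ * (t * ‖A α‖) ≤ (C₂ * t ^ k₂) * (C₁ * t ^ k₁) :=
      mul_le_mul hv' (hAB α).1 (by positivity) (by positivity)
    rw [pow_add]
    nlinarith [norm_nonneg (f (diagPt n t)), norm_nonneg (g (diagPt n t)),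
      norm_nonneg (A α), norm_nonneg (A' α)]
  · have e1 : (f (diagPt n t) • B' + g (diagPt n t) • B) α
        = f (diagPt n t) * B' α + g (diagPt n t) * B α := by
      simp [smul_eq_mul]
    have h1 : ‖(f (diagPt n t) • B' + g (diagPt n t) • B) α‖
        ≤ ‖f (diagPt n t)‖ * ‖B' α‖ + ‖g (diagPt n t)‖ * ‖B α‖ := by
      rw [e1]
      exact (norm_add_le _ _).trans (le_of_eq (by rw [norm_mul, norm_mul]))
    have h2 : ‖f (diagPt n t)‖ * (t * ‖B' α‖) ≤ (C₁ * t ^ k₁) * (C₂ * t ^ k₂) :=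
      mul_le_mul hv (hAB' α).2 (by positivity) (by positivity)
    have h3 : ‖g (diagPt n t)‖ * (t * ‖B α‖) ≤ (C₂ * t ^ k₂) * (C₁ * t ^ k₁) :=
      mul_le_mul hv' (hAB α).2 (by positivity) (by positivity)
    rw [pow_add]
    nlinarith [norm_nonneg (f (diagPt n t)), norm_nonneg (g (diagPt n t)),
      norm_nonneg (B α), norm_nonneg (B' α)]

lemma Ctrl.pow {f : (Fin n → ℂ) → ℂ} {C : ℝ} {k : ℕ}
    (hf : Ctrl f C k) (hC : 0 ≤ C) (p : ℕ) :
    Ctrl (fun w => f w ^ p) ((2 * C) ^ p) (p * k) := by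
  induction p with
  | zero =>
    refine ((ctrl_const (n := n) 1).of_le (by simp) (by simp) (by simp)).congr_fun
      fun w => by simp
  | succ p ih =>
    have h := (ih.mul hf (by positivity) hC).congr_fun (fun w => by rw [← pow_succ])
    have heq : 2 * (2 * C) ^ p * C = (2 * C) ^ (p + 1) := by ring
    have hk : p * k + k = (p + 1) * k := by ring
    rw [heq, hk] at h
    exact h

lemma ctrl_sum {ι : Type*} (s : Finset ι) (f : ι → (Fin n → ℂ) → ℂ) (C : ι → ℝ) (k : ℕ)
    (h : ∀ i ∈ s, Ctrl (f i) (C i) k) :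
    Ctrl (fun w => ∑ i ∈ s, f i w) (∑ i ∈ s, C i) k := by
  classical
  induction s using Finset.induction_on with
  | empty =>
    refine ((ctrl_const (n := n) 0).of_le (by simp) (by simp) (by simp)).congr_fun
      fun w => by simp
  | @insert a s ha ih =>
    rw [Finset.sum_insert ha]
    exact ((h a (Finset.mem_insert_self a s)).add
      (ih fun i hi => h i (Finset.mem_insert_of_mem hi))).congr_fun
      fun w => by rw [Finset.sum_insert ha]

lemma ctrl_prod {ι : Type*} [DecidableEq ι] (s : Finset ι) (f : ι → (Fin n → ℂ) → ℂ)
    (C : ι → ℝ) (k : ι → ℕ)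
    (h : ∀ i ∈ s, Ctrl (f i) (C i) (k i)) (hC : ∀ i ∈ s, 0 ≤ C i) :
    Ctrl (fun w => ∏ i ∈ s, f i w) (∏ i ∈ s, (2 * C i)) (∑ i ∈ s, k i) := by
  induction s using Finset.induction_on with
  | empty =>
    refine ((ctrl_const (n := n) 1).of_le (by simp) (by simp) (by simp)).congr_fun
      fun w => by simp
  | @insert a s ha ih =>
    have h1 := (h a (Finset.mem_insert_self a s)).mul
      (ih (fun i hi => h i (Finset.mem_insert_of_mem hi))
          (fun i hi => hC i (Finset.mem_insert_of_mem hi)))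
      (hC a (Finset.mem_insert_self a s))
      (Finset.prod_nonneg fun i hi => by
        have := hC i (Finset.mem_insert_of_mem hi); positivity)
    rw [Finset.prod_insert ha, Finset.sum_insert ha]
    exact h1.congr_fun fun w => by rw [Finset.prod_insert ha]

/-! ### Existential wrappers -/

lemma ctrl_mul_exists {f g : (Fin n → ℂ) → ℂ} {k₁ k₂ : ℕ}
    (hf : ∃ C, 0 ≤ C ∧ Ctrl f C k₁) (hg : ∃ C, 0 ≤ C ∧ Ctrl g C k₂) :
    ∃ C, 0 ≤ C ∧ Ctrl (fun w => f w * g w) C (k₁ + k₂) := by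
  obtain ⟨C₁, h₁, hC₁⟩ := hf
  obtain ⟨C₂, h₂, hC₂⟩ := hg
  exact ⟨2 * C₁ * C₂, by positivity, hC₁.mul hC₂ h₁ h₂⟩

lemma ctrl_add_exists {f g : (Fin n → ℂ) → ℂ} {k : ℕ}
    (hf : ∃ C, 0 ≤ C ∧ Ctrl f C k) (hg : ∃ C, 0 ≤ C ∧ Ctrl g C k) :
    ∃ C, 0 ≤ C ∧ Ctrl (fun w => f w + g w) C k := by
  obtain ⟨C₁, h₁, hC₁⟩ := hf
  obtain ⟨C₂, h₂, hC₂⟩ := hg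
  exact ⟨C₁ + C₂, by positivity, hC₁.add hC₂⟩

lemma ctrl_pow_exists {f : (Fin n → ℂ) → ℂ} {k : ℕ} (p : ℕ)
    (hf : ∃ C, 0 ≤ C ∧ Ctrl f C k) :
    ∃ C, 0 ≤ C ∧ Ctrl (fun w => f w ^ p) C (p * k) := by
  obtain ⟨C₁, h₁, hC₁⟩ := hf
  exact ⟨(2 * C₁) ^ p, by positivity, hC₁.pow h₁ p⟩

lemma ctrl_sum_exists {ι : Type*} (s : Finset ι) (f : ι → (Fin n → ℂ) → ℂ) (k : ℕ)
    (h : ∀ i, ∃ C, 0 ≤ C ∧ Ctrl (f i) C k) :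
    ∃ C, 0 ≤ C ∧ Ctrl (fun w => ∑ i ∈ s, f i w) C k := by
  choose C h0 hC using h
  exact ⟨∑ i ∈ s, C i, Finset.sum_nonneg fun i _ => h0 i,
    ctrl_sum s f C k fun i _ => hC i⟩

lemma ctrl_prod_exists {ι : Type*} [DecidableEq ι] (s : Finset ι)
    (f : ι → (Fin n → ℂ) → ℂ) (k : ι → ℕ)
    (h : ∀ i, ∃ C, 0 ≤ C ∧ Ctrl (f i) C (k i)) :
    ∃ C, 0 ≤ C ∧ Ctrl (fun w => ∏ i ∈ s, f i w) C (∑ i ∈ s, k i) := by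
  choose C h0 hC using h
  exact ⟨∏ i ∈ s, (2 * C i), Finset.prod_nonneg fun i _ => by have := h0 i; positivity,
    ctrl_prod s f C k (fun i _ => hC i) (fun i _ => h0 i)⟩

lemma ctrl_exists_of_le {f : (Fin n → ℂ) → ℂ} {k k' : ℕ}
    (hf : ∃ C, 0 ≤ C ∧ Ctrl f C k) (hk : k ≤ k') :
    ∃ C, 0 ≤ C ∧ Ctrl f C k' := by
  obtain ⟨C₁, h₁, hC₁⟩ := hf
  exact ⟨C₁, h₁, hC₁.of_le le_rfl hk h₁⟩

lemma ctrl_exists_congr {f g : (Fin n → ℂ) → ℂ} {k : ℕ}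
    (hf : ∃ C, 0 ≤ C ∧ Ctrl f C k) (hfg : ∀ w, f w = g w) :
    ∃ C, 0 ≤ C ∧ Ctrl g C k := by
  obtain ⟨C₁, h₁, hC₁⟩ := hf
  exact ⟨C₁, h₁, hC₁.congr_fun hfg⟩

/-! ### The concrete potential -/

variable {N : ℕ} (a : Fin N → ℝ) (m : Fin N → Fin n → ℕ)

noncomputable def Pc : (Fin n → ℂ) → ℂ := fun w =>
  ((fun _ => (1 : ℂ)) w + ∑ j, w j * (starRingEnd ℂ) (w j))
    + ∑ j, (a j : ℂ) * ∏ i, (w i * (starRingEnd ℂ) (w i)) ^ (m j i)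

noncomputable def BPvec (z : Fin n → ℂ) : Fin n → ℂ :=
  ((0 : Fin n → ℂ) + ∑ j, (z j • (Pi.single j (1:ℂ) : Fin n → ℂ) + (starRingEnd ℂ) (z j) • (0 : Fin n → ℂ)))
  + ∑ j, ((a j : ℂ) • (∑ i, (∏ k ∈ Finset.univ.erase i,
        (z k * (starRingEnd ℂ) (z k)) ^ (m j k)) •
      (((m j i : ℂ) * (z i * (starRingEnd ℂ) (z i)) ^ (m j i - 1)) •
        (z i • (Pi.single i (1:ℂ) : Fin n → ℂ) + (starRingEnd ℂ) (z i) • (0 : Fin n → ℂ))))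
    + (∏ i, (z i * (starRingEnd ℂ) (z i)) ^ (m j i)) • (0 : Fin n → ℂ))

lemma hasW_Pc (z : Fin n → ℂ) : ∃ A : Fin n → ℂ, HasW (Pc a m) A (BPvec a m z) z := by
  classical
  have hsq : ∀ i : Fin n, HasW (fun w => w i * (starRingEnd ℂ) (w i))
      ((fun w => w i) z • (0 : Fin n → ℂ) + (fun w => (starRingEnd ℂ) (w i)) z • (Pi.single i (1:ℂ) : Fin n → ℂ))
      ((fun w => w i) z • (Pi.single i (1:ℂ) : Fin n → ℂ) + (fun w => (starRingEnd ℂ) (w i)) z • (0 : Fin n → ℂ))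
      z := fun i => (hasW_proj i z).mul (hasW_conj_proj i z)
  have h2 := hasW_sum Finset.univ (fun j => fun w => w j * (starRingEnd ℂ) (w j)) _ _ z
    (fun j _ => hsq j)
  have h3 : ∀ j : Fin N, ∃ A, HasW (fun w => (a j : ℂ) * ∏ i, (w i * (starRingEnd ℂ) (w i)) ^ (m j i))
      A ((a j : ℂ) • (∑ i, (∏ k ∈ Finset.univ.erase i,
          (z k * (starRingEnd ℂ) (z k)) ^ (m j k)) •
        (((m j i : ℂ) * (z i * (starRingEnd ℂ) (z i)) ^ (m j i - 1)) •
          (z i • (Pi.single i (1:ℂ) : Fin n → ℂ) + (starRingEnd ℂ) (z i) • (0 : Fin n → ℂ))))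
      + (∏ i, (z i * (starRingEnd ℂ) (z i)) ^ (m j i)) • (0 : Fin n → ℂ)) z := by
    intro j
    have hpow : ∀ i : Fin n, HasW (fun w => (w i * (starRingEnd ℂ) (w i)) ^ (m j i))
        (((m j i : ℂ) * (z i * (starRingEnd ℂ) (z i)) ^ (m j i - 1)) •
          ((fun w => w i) z • (0 : Fin n → ℂ) + (fun w => (starRingEnd ℂ) (w i)) z • (Pi.single i (1:ℂ) : Fin n → ℂ)))
        (((m j i : ℂ) * (z i * (starRingEnd ℂ) (z i)) ^ (m j i - 1)) •
          (z i • (Pi.single i (1:ℂ) : Fin n → ℂ) + (starRingEnd ℂ) (z i) • (0 : Fin n → ℂ)))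
        z := fun i => (hsq i).pow (m j i)
    have hprod := hasW_prod Finset.univ (fun i => fun w => (w i * (starRingEnd ℂ) (w i)) ^ (m j i))
      _ _ z (fun i _ => hpow i)
    have hmul := (hasW_const ((a j : ℂ)) z).mul hprod
    exact ⟨_, hmul⟩
  choose A3 hA3 using h3
  have h3' := hasW_sum Finset.univ
    (fun j => fun w => (a j : ℂ) * ∏ i, (w i * (starRingEnd ℂ) (w i)) ^ (m j i)) _ _ z
    (fun j _ => hA3 j)
  have htot := ((hasW_const 1 z).add h2).add h3'
  refine ⟨_, htot.congr_fun fun w => rfl⟩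


variable (M : ℕ)

lemma ctrl_sq (i : Fin n) :
    ∃ C, 0 ≤ C ∧ Ctrl (fun w => w i * (starRingEnd ℂ) (w i)) C 2 :=
  ctrl_mul_exists ⟨1, zero_le_one, ctrl_proj i⟩ ⟨1, zero_le_one, ctrl_conj_proj i⟩

lemma ctrl_Pc (hM1 : 1 ≤ M) (hMm : ∀ j, ∑ i, m j i ≤ M) :
    ∃ C, 0 ≤ C ∧ Ctrl (Pc a m) C (2 * M) := by
  classical
  have c1 : ∃ C, 0 ≤ C ∧ Ctrl (n := n) (fun _ => (1:ℂ)) C (2 * M) :=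
    ctrl_exists_of_le ⟨1, zero_le_one, by simpa using ctrl_const (n := n) (1:ℂ)⟩ (by omega)
  have s2 : ∃ C, 0 ≤ C ∧ Ctrl (fun w => ∑ j : Fin n, w j * (starRingEnd ℂ) (w j)) C (2 * M) :=
    ctrl_sum_exists Finset.univ _ _ (fun j => ctrl_exists_of_le (ctrl_sq j) (by omega))
  have s3 : ∃ C, 0 ≤ C ∧ Ctrl
      (fun w => ∑ j, (a j : ℂ) * ∏ i, (w i * (starRingEnd ℂ) (w i)) ^ (m j i)) C (2 * M) := by
    refine ctrl_sum_exists Finset.univ _ _ (fun j => ?_)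
    have hmono : ∃ C, 0 ≤ C ∧ Ctrl (fun w => ∏ i, (w i * (starRingEnd ℂ) (w i)) ^ (m j i)) C
        (∑ i, m j i * 2) :=
      ctrl_prod_exists Finset.univ _ _ (fun i => ctrl_pow_exists (m j i) (ctrl_sq i))
    have hmul := ctrl_mul_exists ⟨‖((a j : ℝ) : ℂ)‖, norm_nonneg _, ctrl_const _⟩ hmono
    refine ctrl_exists_of_le hmul ?_
    have h1 : ∑ i, m j i * 2 = (∑ i, m j i) * 2 := by rw [Finset.sum_mul]
    have h2 := hMm j
    omega
  exact ctrl_exists_congr (ctrl_add_exists (ctrl_add_exists c1 s2) s3) (fun w => rfl)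

lemma ctrl_BPvec (hM1 : 1 ≤ M) (hMm : ∀ j, ∑ i, m j i ≤ M) (β : Fin n) :
    ∃ C, 0 ≤ C ∧ Ctrl (fun w => BPvec a m w β) C (2 * M) := by
  classical
  have p0 : ∃ C, 0 ≤ C ∧ Ctrl (n := n) (fun _ => (0:ℂ)) C (2 * M) :=
    ctrl_exists_of_le ⟨0, le_rfl, by simpa using ctrl_const (n := n) (0:ℂ)⟩ (by omega)
  have t1 : ∀ j : Fin n, ∃ C, 0 ≤ C ∧ Ctrl
      (fun w => w j * (Pi.single j (1:ℂ) : Fin n → ℂ) β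
        + (starRingEnd ℂ) (w j) * (0:ℂ)) C (2 * M) := by
    intro j
    refine ctrl_exists_of_le (ctrl_add_exists
      (ctrl_mul_exists ⟨1, zero_le_one, ctrl_proj j⟩
        ⟨_, norm_nonneg _, ctrl_const ((Pi.single j (1:ℂ) : Fin n → ℂ) β)⟩)
      (ctrl_mul_exists ⟨1, zero_le_one, ctrl_conj_proj j⟩
        ⟨_, norm_nonneg _, ctrl_const (0:ℂ)⟩)) (by omega)
  have s1 : ∃ C, 0 ≤ C ∧ Ctrl
      (fun w => ∑ j : Fin n, (w j * (Pi.single j (1:ℂ) : Fin n → ℂ) β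
        + (starRingEnd ℂ) (w j) * (0:ℂ))) C (2 * M) :=
    ctrl_sum_exists Finset.univ _ _ t1
  have hterm : ∀ (j : Fin N) (i : Fin n), ∃ C, 0 ≤ C ∧ Ctrl
      (fun w => (∏ k ∈ Finset.univ.erase i, (w k * (starRingEnd ℂ) (w k)) ^ (m j k))
        * (((m j i : ℂ) * (w i * (starRingEnd ℂ) (w i)) ^ (m j i - 1))
          * (w i * (Pi.single i (1:ℂ) : Fin n → ℂ) β + (starRingEnd ℂ) (w i) * (0:ℂ))))
      C (2 * M) := by
    intro j i
    by_cases h : m j i = 0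
    · refine ⟨0, le_rfl, ((ctrl_const (n := n) (0:ℂ)).of_le (by simp) (by omega)
        (norm_nonneg _)).congr_fun fun w => ?_⟩
      simp [h]
    · have hprod : ∃ C, 0 ≤ C ∧ Ctrl
          (fun w => ∏ k ∈ Finset.univ.erase i, (w k * (starRingEnd ℂ) (w k)) ^ (m j k)) C
          (∑ k ∈ Finset.univ.erase i, m j k * 2) :=
        ctrl_prod_exists _ _ _ (fun k => ctrl_pow_exists (m j k) (ctrl_sq k))
      have hnum := ctrl_mul_exists ⟨_, norm_nonneg _, ctrl_const ((m j i : ℂ))⟩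
        (ctrl_pow_exists (m j i - 1) (ctrl_sq i))
      have hlin : ∃ C, 0 ≤ C ∧ Ctrl
          (fun w => w i * (Pi.single i (1:ℂ) : Fin n → ℂ) β
            + (starRingEnd ℂ) (w i) * (0:ℂ)) C (1 + 0) :=
        ctrl_add_exists
          (ctrl_mul_exists ⟨1, zero_le_one, ctrl_proj i⟩ ⟨_, norm_nonneg _, ctrl_const _⟩)
          (ctrl_mul_exists ⟨1, zero_le_one, ctrl_conj_proj i⟩ ⟨_, norm_nonneg _, ctrl_const _⟩)
      have hfull := ctrl_mul_exists hprod (ctrl_mul_exists hnum hlin)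
      refine ctrl_exists_of_le hfull ?_
      have hs : ∑ k ∈ Finset.univ.erase i, m j k + m j i = ∑ k, m j k :=
        Finset.sum_erase_add _ _ (Finset.mem_univ i)
      have h1 : ∑ k ∈ Finset.univ.erase i, m j k * 2
          = (∑ k ∈ Finset.univ.erase i, m j k) * 2 := by rw [Finset.sum_mul]
      have h2 := hMm j
      omega
  have hj : ∀ j : Fin N, ∃ C, 0 ≤ C ∧ Ctrl
      (fun w => (a j : ℂ) * (∑ i, (∏ k ∈ Finset.univ.erase i,
            (w k * (starRingEnd ℂ) (w k)) ^ (m j k))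
          * (((m j i : ℂ) * (w i * (starRingEnd ℂ) (w i)) ^ (m j i - 1))
            * (w i * (Pi.single i (1:ℂ) : Fin n → ℂ) β + (starRingEnd ℂ) (w i) * (0:ℂ))))
        + (∏ i, (w i * (starRingEnd ℂ) (w i)) ^ (m j i)) * (0:ℂ)) C (2 * M) := by
    intro j
    have hsum := ctrl_sum_exists Finset.univ _ (2 * M) (hterm j)
    have hmul := ctrl_mul_exists ⟨_, norm_nonneg _, ctrl_const ((a j : ℂ))⟩ hsum
    have hzero : ∃ C, 0 ≤ C ∧ Ctrl
        (fun w => (∏ i, (w i * (starRingEnd ℂ) (w i)) ^ (m j i)) * (0:ℂ)) C (2 * M) := by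
      refine ⟨0, le_rfl, ((ctrl_const (n := n) (0:ℂ)).of_le (by simp) (by omega)
        (norm_nonneg _)).congr_fun fun w => ?_⟩
      simp
    exact ctrl_add_exists (ctrl_exists_of_le hmul (by omega)) hzero
  have hsj := ctrl_sum_exists Finset.univ _ (2 * M) hj
  have htot := ctrl_add_exists (ctrl_add_exists p0 s1) hsj
  refine ctrl_exists_congr htot (fun w => ?_)
  simp only [BPvec, Pi.add_apply, Finset.sum_apply, Pi.smul_apply, Pi.zero_apply,
    smul_eq_mul]


lemma hasW_logP (P : (Fin n → ℂ) → ℝ) (hPceq : ∀ w, ((P w : ℝ) : ℂ) = Pc a m w)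
    (hP1 : ∀ w, 1 ≤ P w) (z : Fin n → ℂ) :
    ∃ A : Fin n → ℂ, HasW (fun v => ((Real.log (P v) : ℝ) : ℂ)) A
      ((Pc a m z)⁻¹ • BPvec a m z) z := by
  obtain ⟨A, hA⟩ := hasW_Pc a m z
  have hpos : 0 < P z := lt_of_lt_of_le one_pos (hP1 z)
  have hslit : Pc a m z ∈ Complex.slitPlane := by
    rw [← hPceq]; exact Complex.ofReal_mem_slitPlane.2 hpos
  have hlog := (Complex.hasStrictFDerivAt_log_real hslit).hasFDerivAt.comp z
    (hA : HasFDerivAt _ (lin A (BPvec a m z)) z)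
  have hCLM : ((Pc a m z)⁻¹ • (1 : ℂ →L[ℝ] ℂ)).comp (lin A (BPvec a m z))
      = lin ((Pc a m z)⁻¹ • A) ((Pc a m z)⁻¹ • BPvec a m z) := by
    rw [lin_smul]
    ext v
    simp
  rw [hCLM] at hlog
  refine ⟨(Pc a m z)⁻¹ • A, ?_⟩
  have hfun : (Complex.log ∘ Pc a m) = fun v => ((Real.log (P v) : ℝ) : ℂ) := by
    funext v
    have h0 : (0:ℝ) ≤ P v := (lt_of_lt_of_le one_pos (hP1 v)).le
    simp only [Function.comp_apply, ← hPceq v]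
    exact (Complex.ofReal_log h0).symm
  rw [hfun] at hlog
  exact hlog

lemma wDbar_logP (P : (Fin n → ℂ) → ℝ) (hPceq : ∀ w, ((P w : ℝ) : ℂ) = Pc a m w)
    (hP1 : ∀ w, 1 ≤ P w) (β : Fin n) (w : Fin n → ℂ) :
    wDbar (fun v => ((Real.log (P v) : ℝ) : ℂ)) β w = (Pc a m w)⁻¹ * BPvec a m w β := by
  obtain ⟨A, hA⟩ := hasW_logP a m P hPceq hP1 w
  rw [hA.wDbar_eq β]
  simp [smul_eq_mul]

lemma entry_bound (P : (Fin n → ℂ) → ℝ) (hPceq : ∀ w, ((P w : ℝ) : ℂ) = Pc a m w)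
    (hP1 : ∀ w, 1 ≤ P w) (hM1 : 1 ≤ M) (hMm : ∀ j, ∑ i, m j i ≤ M)
    (c : ℝ) (hc : 0 < c) (hlow : ∀ t, 1 ≤ t → c * t ^ (2 * M) ≤ P (diagPt n t)) :
    ∃ K, 0 ≤ K ∧ ∀ t, 1 ≤ t → ∀ (α β : Fin n),
      t * ‖wD (fun w => wDbar (fun v => ((Real.log (P v) : ℝ) : ℂ)) β w) α (diagPt n t)‖
        ≤ K := by
  classical
  obtain ⟨CP, hCP0, hCP⟩ := ctrl_Pc a m M hM1 hMm
  choose CB hCB0 hCB using fun β => ctrl_BPvec a m M hM1 hMm β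
  refine ⟨∑ β, (CB β / c + CB β * CP / c ^ 2),
    Finset.sum_nonneg fun β _ => by have := hCB0 β; positivity,
    fun t ht α β => ?_⟩
  set zt := diagPt n t with hzt
  have ht0 : (0:ℝ) < t := lt_of_lt_of_le one_pos ht
  have hu : (0:ℝ) < t ^ (2 * M) := pow_pos ht0 _
  set u := t ^ (2 * M) with hudef
  set Q := P zt with hQdef
  have hQ1 : 1 ≤ Q := hP1 zt
  have hQpos : (0:ℝ) < Q := lt_of_lt_of_le one_pos hQ1
  have hQc : c * u ≤ Q := hlow t ht
  have hcu : (0:ℝ) < c * u := by positivity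
  have hPcne : Pc a m zt ≠ 0 := by
    rw [← hPceq]
    exact_mod_cast hQpos.ne'
  -- derivative data at zt
  obtain ⟨AP, BP', hWP, hvP, hABP⟩ := hCP t ht
  obtain ⟨AB, BB, hWB, hvB, hABB⟩ := hCB β t ht
  have hCBb : (0:ℝ) ≤ CB β := hCB0 β
  have hinv := hWP.inv hPcne
  have hmul := hinv.mul hWB
  -- identify the function whose wD we take
  have hfun : (fun w => wDbar (fun v => ((Real.log (P v) : ℝ) : ℂ)) β w)
      = fun w => (Pc a m w)⁻¹ * BPvec a m w β := by
    funext w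
    exact wDbar_logP a m P hPceq hP1 β w
  rw [hfun]
  rw [hmul.wD_eq α]
  -- norms
  have hnormPc : ‖Pc a m zt‖ = Q := by
    rw [← hPceq]
    simp [Complex.norm_real, abs_of_pos hQpos]
    exact abs_of_pos hQpos
  have hA_apply : ((fun w => (Pc a m w)⁻¹) zt • AB
      + (fun w => BPvec a m w β) zt • (-(Pc a m zt ^ 2)⁻¹) • AP) α
      = (Pc a m zt)⁻¹ * AB α + BPvec a m zt β * ((-(Pc a m zt ^ 2)⁻¹) * AP α) := by
    simp [smul_eq_mul, mul_assoc]
  rw [hA_apply]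
  have hb1 : ‖(Pc a m zt)⁻¹ * AB α‖ = Q⁻¹ * ‖AB α‖ := by
    rw [norm_mul, norm_inv, hnormPc]
  have hb2 : ‖BPvec a m zt β * ((-(Pc a m zt ^ 2)⁻¹) * AP α)‖
      = ‖BPvec a m zt β‖ * ((Q ^ 2)⁻¹ * ‖AP α‖) := by
    rw [norm_mul, norm_mul, norm_neg, norm_inv, norm_pow, hnormPc]
  have htri : t * ‖(Pc a m zt)⁻¹ * AB α + BPvec a m zt β * ((-(Pc a m zt ^ 2)⁻¹) * AP α)‖
      ≤ Q⁻¹ * (t * ‖AB α‖) + ‖BPvec a m zt β‖ * ((Q ^ 2)⁻¹ * (t * ‖AP α‖)) := by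
    have := norm_add_le ((Pc a m zt)⁻¹ * AB α) (BPvec a m zt β * ((-(Pc a m zt ^ 2)⁻¹) * AP α))
    rw [hb1] at this
    rw [hb2] at this
    nlinarith [norm_nonneg (AB α), norm_nonneg (AP α), norm_nonneg (BPvec a m zt β),
      inv_pos.2 hQpos, inv_pos.2 (pow_pos hQpos 2)]
  refine htri.trans ?_
  have hvB' : ‖BPvec a m zt β‖ ≤ CB β * u := hvB
  have hAB1 : t * ‖AB α‖ ≤ CB β * u := (hABB α).1
  have hAP1 : t * ‖AP α‖ ≤ CP * u := (hABP α).1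
  have hinv1 : Q⁻¹ ≤ (c * u)⁻¹ := by
    apply inv_anti₀ hcu hQc
  have hinv2 : (Q ^ 2)⁻¹ ≤ ((c * u) ^ 2)⁻¹ := by
    apply inv_anti₀ (by positivity)
    exact pow_le_pow_left₀ hcu.le hQc 2
  have hterm1 : Q⁻¹ * (t * ‖AB α‖) ≤ (c * u)⁻¹ * (CB β * u) :=
    mul_le_mul hinv1 hAB1 (by positivity) (by positivity)
  have hterm2 : ‖BPvec a m zt β‖ * ((Q ^ 2)⁻¹ * (t * ‖AP α‖))
      ≤ (CB β * u) * (((c * u) ^ 2)⁻¹ * (CP * u)) := by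
    apply mul_le_mul hvB'
    · exact mul_le_mul hinv2 hAP1 (by positivity) (by positivity)
    · positivity
    · positivity
  have he1 : (c * u)⁻¹ * (CB β * u) = CB β / c := by
    field_simp
  have he2 : (CB β * u) * (((c * u) ^ 2)⁻¹ * (CP * u)) = CB β * CP / c ^ 2 := by
    field_simp
  rw [he1] at hterm1
  rw [he2] at hterm2
  have hle : Q⁻¹ * (t * ‖AB α‖) + ‖BPvec a m zt β‖ * ((Q ^ 2)⁻¹ * (t * ‖AP α‖))
      ≤ CB β / c + CB β * CP / c ^ 2 := add_le_add hterm1 hterm2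
  refine hle.trans ?_
  have : ∀ γ : Fin n, (0:ℝ) ≤ CB γ / c + CB γ * CP / c ^ 2 := fun γ => by
    have := hCB0 γ
    positivity
  exact Finset.single_le_sum (fun γ _ => this γ) (Finset.mem_univ β)


lemma det_bound (A : Matrix (Fin n) (Fin n) ℂ) (x : ℝ) (hx : 0 ≤ x)
    (h : ∀ i j, ‖A i j‖ ≤ x) : ‖A.det‖ ≤ (Nat.factorial n) * x ^ n := by
  classical
  rw [Matrix.det_apply]
  refine (norm_sum_le _ _).trans ?_
  have hterm : ∀ σ : Equiv.Perm (Fin n), ‖Equiv.Perm.sign σ • ∏ i, A (σ i) i‖ ≤ x ^ n := by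
    intro σ
    have h1 : ‖Equiv.Perm.sign σ • ∏ i, A (σ i) i‖ = ‖∏ i, A (σ i) i‖ := by
      rcases Int.units_eq_one_or (Equiv.Perm.sign σ) with hs | hs <;> simp [hs]
    rw [h1, norm_prod]
    calc ∏ i, ‖A (σ i) i‖ ≤ ∏ _i : Fin n, x :=
          Finset.prod_le_prod (fun i _ => norm_nonneg _) (fun i _ => h (σ i) i)
      _ = x ^ n := by rw [Finset.prod_const, Finset.card_univ, Fintype.card_fin]
  calc ∑ σ : Equiv.Perm (Fin n), ‖Equiv.Perm.sign σ • ∏ i, A (σ i) i‖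
      ≤ ∑ _σ : Equiv.Perm (Fin n), x ^ n := Finset.sum_le_sum fun σ _ => hterm σ
    _ = (Nat.factorial n) * x ^ n := by
        rw [Finset.sum_const, Finset.card_univ, Fintype.card_perm, Fintype.card_fin,
          nsmul_eq_mul]

end W

end

/-- If `Φ = log P`, `P = 1 + Σ|z_j|² + Σ a_j |z^{m_j}|²` with `a_j > 0`, and the
metric `g_{αβ̄} = ∂²Φ/∂z_α∂z̄_β` satisfies `det g · P^{λ/2} ≡ 1` with `q = λ/2 ∈ ℤ`,
then `λ > 0`, i.e. `q > 0`. -/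
theorem stmt2 (n N : ℕ) (hn : 0 < n) (a : Fin N → ℝ) (m : Fin N → (Fin n → ℕ))
    (ha : ∀ j, 0 < a j) (hm : Function.Injective m) (hdeg : ∀ j, 2 ≤ ∑ i, m j i)
    (P : (Fin n → ℂ) → ℝ)
    (hP : ∀ z, P z = 1 + ∑ j, ‖z j‖ ^ 2 + ∑ j, a j * ∏ i, ‖z i‖ ^ (2 * m j i))
    (Φ : (Fin n → ℂ) → ℝ) (hΦ : ∀ z, Φ z = Real.log (P z))
    (q : ℤ) (lam : ℝ) (hlam : lam = 2 * q)
    (heq : ∀ z, (kahlerMatrix Φ z).det * (P z : ℂ) ^ q = 1) :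
    0 < lam := by
  classical
  suffices hq : 0 < q by
    have h1 : (1:ℝ) ≤ (q:ℝ) := by exact_mod_cast hq
    rw [hlam]; linarith
  by_contra hq
  push_neg at hq
  -- `M` dominates all degrees
  set M : ℕ := max 1 (Finset.univ.sup (fun j => ∑ i, m j i)) with hM
  have hM1 : 1 ≤ M := le_max_left _ _
  have hMm : ∀ j, ∑ i, m j i ≤ M := by
    intro j
    rw [hM]
    exact le_trans (Finset.le_sup (f := fun j => ∑ i, m j i) (Finset.mem_univ j))
      (le_max_right _ _)
  -- basic facts about P
  have hkey : ∀ z : ℂ, ((‖z‖ : ℝ) : ℂ) ^ 2 = z * (starRingEnd ℂ) z := by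
    intro z
    rw [Complex.mul_conj]
    norm_cast
    exact Complex.sq_norm z
  have hP1 : ∀ w, 1 ≤ P w := by
    intro w
    rw [hP w]
    have h1 : 0 ≤ ∑ j, ‖w j‖ ^ 2 := Finset.sum_nonneg fun j _ => by positivity
    have h2 : 0 ≤ ∑ j, a j * ∏ i, ‖w i‖ ^ (2 * m j i) :=
      Finset.sum_nonneg fun j _ => mul_nonneg (ha j).le
        (Finset.prod_nonneg fun i _ => by positivity)
    linarith
  have hPceq : ∀ w, ((P w : ℝ) : ℂ) = W.Pc a m w := by
    intro w
    rw [hP w]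
    unfold W.Pc
    push_cast
    congr 1
    · congr 1
      exact Finset.sum_congr rfl fun j _ => hkey (w j)
    · refine Finset.sum_congr rfl fun j _ => ?_
      congr 1
      refine Finset.prod_congr rfl fun i _ => ?_
      rw [pow_mul]
      rw [hkey (w i)]
  -- value of P along the diagonal
  have hdiag : ∀ t : ℝ, 1 ≤ t → P (W.diagPt n t)
      = 1 + n * t ^ 2 + ∑ j, a j * t ^ (2 * (∑ i, m j i)) := by
    intro t ht
    have ht0 : (0:ℝ) < t := lt_of_lt_of_le one_pos ht
    have hnt : ‖((t:ℝ) : ℂ)‖ = t := by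
      simp [Complex.norm_real, abs_of_pos ht0]
    rw [hP]
    congr 1
    · congr 1
      simp only [W.diagPt, hnt]
      rw [Finset.sum_const, Finset.card_univ, Fintype.card_fin, nsmul_eq_mul]
    · refine Finset.sum_congr rfl fun j _ => ?_
      congr 1
      simp only [W.diagPt, hnt]
      rw [Finset.prod_pow_eq_pow_sum]
      congr 1
      rw [Finset.mul_sum]
  -- lower bound along the diagonal
  have hlow : ∃ c : ℝ, 0 < c ∧ ∀ t, 1 ≤ t → c * t ^ (2 * M) ≤ P (W.diagPt n t) := by
    rcases Nat.eq_zero_or_pos N with hN | hN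
    · subst hN
      have hM' : M = 1 := by
        rw [hM]
        simp
      refine ⟨1, one_pos, fun t ht => ?_⟩
      have ht0 : (0:ℝ) < t := lt_of_lt_of_le one_pos ht
      rw [hdiag t ht, hM']
      have hn' : (1:ℝ) ≤ n := by exact_mod_cast hn
      have hs0 : ∑ j : Fin 0, a j * t ^ (2 * (∑ i, m j i)) = 0 := by simp
      rw [hs0]
      have h2 : t ^ (2 * 1) = t ^ 2 := by norm_num
      rw [h2]
      nlinarith [sq_nonneg t]
    · have hne : Nonempty (Fin N) := ⟨⟨0, hN⟩⟩
      obtain ⟨j₀, _, hj₀⟩ := Finset.exists_mem_eq_sup Finset.univ Finset.univ_nonempty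
        (fun j : Fin N => ∑ i, m j i)
      have hMeq : M = ∑ i, m j₀ i := by
        rw [hM, hj₀]
        exact max_eq_right (le_trans (by norm_num) (hdeg j₀))
      refine ⟨a j₀, ha j₀, fun t ht => ?_⟩
      have ht0 : (0:ℝ) < t := lt_of_lt_of_le one_pos ht
      rw [hdiag t ht, hMeq]
      have hterm : a j₀ * t ^ (2 * ∑ i, m j₀ i) ≤ ∑ j, a j * t ^ (2 * (∑ i, m j i)) :=
        Finset.single_le_sum (f := fun j => a j * t ^ (2 * ∑ i, m j i))
          (fun j _ => mul_nonneg (ha j).le (by positivity)) (Finset.mem_univ j₀)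
      have h0 : (0:ℝ) ≤ (n:ℝ) * t ^ 2 := by positivity
      linarith
  obtain ⟨c, hc, hlowb⟩ := hlow
  obtain ⟨K, hK0, hKb⟩ := W.entry_bound a m M P hPceq hP1 hM1 hMm c hc hlowb
  have hΦfun : (fun v => ((Φ v : ℝ) : ℂ)) = fun v => ((Real.log (P v) : ℝ) : ℂ) :=
    funext fun v => by rw [hΦ v]
  -- choose a large parameter
  set T : ℝ := max 1 ((Nat.factorial n) * K ^ n + 1) with hT
  have hT1 : 1 ≤ T := le_max_left _ _
  have hT0 : (0:ℝ) < T := lt_of_lt_of_le one_pos hT1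
  set zt := W.diagPt n T with hzt
  have hent : ∀ α β, ‖kahlerMatrix Φ zt α β‖ ≤ K / T := by
    intro α β
    have h1 : T * ‖kahlerMatrix Φ zt α β‖ ≤ K := by
      have h2 := hKb T hT1 α β
      unfold kahlerMatrix
      rw [hΦfun]
      exact h2
    rw [le_div_iff₀ hT0]
    linarith
  have hdet : ‖(kahlerMatrix Φ zt).det‖ ≤ (Nat.factorial n) * (K / T) ^ n :=
    W.det_bound _ _ (by positivity) hent
  have h1 := heq zt
  have hnorm : ‖(kahlerMatrix Φ zt).det‖ * ‖((P zt : ℝ) : ℂ) ^ q‖ = 1 := by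
    rw [← norm_mul, h1, norm_one]
  have hQpos : (0:ℝ) < P zt := lt_of_lt_of_le one_pos (hP1 zt)
  have hnormP : ‖((P zt : ℝ) : ℂ)‖ = P zt := by
    simp [Complex.norm_real, abs_of_pos hQpos]
  have hPq : ‖((P zt : ℝ) : ℂ) ^ q‖ ≤ 1 := by
    rw [norm_zpow, hnormP]
    exact zpow_le_one_of_nonpos₀ (hP1 zt) hq
  have hPqpos : (0:ℝ) < ‖((P zt : ℝ) : ℂ) ^ q‖ := by
    rw [norm_zpow, hnormP]
    exact zpow_pos hQpos q
  have hdet1 : 1 ≤ ‖(kahlerMatrix Φ zt).det‖ := by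
    nlinarith [norm_nonneg ((kahlerMatrix Φ zt).det)]
  have h2 : 1 ≤ (Nat.factorial n) * (K / T) ^ n := le_trans hdet1 hdet
  rw [div_pow, ← mul_div_assoc] at h2
  have hTn0 : (0:ℝ) < T ^ n := pow_pos hT0 n
  have hTn : T ^ n ≤ (Nat.factorial n) * K ^ n := (one_le_div hTn0).mp h2
  have hTbig : (Nat.factorial n) * K ^ n + 1 ≤ T := le_max_right _ _
  have hTlin : T ≤ T ^ n := by
    calc T = T ^ 1 := (pow_one T).symm
      _ ≤ T ^ n := pow_le_pow_right₀ hT1 hn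
  linarith
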